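/- For every n ≥ 3, the cooling number of the cycle C_n on n vertices equals ⌈(n+2)/3⌉. -/

import Mathlib

/-- A cooling sequence for `G`: a sequence `v : Fin k → V` of sources (the `i`-th source,
0-based, is chosen in round `i + 1`) such that each source is uncooled when chosen
(`dist (v i) (v j) > j - i` for `i < j` in 1-based indexing), and the sequence cannot be
extended: every vertex is cooled by the end of round `k + 1`. -/
def IsCoolingSeq {V : Type*} (G : SimpleGraph V) {k : ℕ} (v : Fin k → V) : Prop :=
  (∀ i j : Fin k, i < j → (j : ℕ) - (i : ℕ) < G.dist (v i) (v j)) ∧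
  (∀ u : V, ∃ i : Fin k, (i : ℕ) + 1 + G.dist (v i) u ≤ k + 1)

/-- The round in which the cooling process with sources `v` ends: the maximum over
vertices `u` of the first round in which `u` is cooled, `min_i (i + dist (v i) u)`
(1-based `i`). -/
noncomputable def coolTime {V : Type*} [Fintype V] (G : SimpleGraph V) {k : ℕ}
    (v : Fin k → V) : ℕ :=
  Finset.univ.sup fun u : V => sInf {m : ℕ | ∃ i : Fin k, m = (i : ℕ) + 1 + G.dist (v i) u}

/-- The cooling number of `G`: the maximum, over all cooling sequences of `G`, of the
round in which the cooling process ends. -/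
noncomputable def coolingNumber {V : Type*} [Fintype V] (G : SimpleGraph V) : ℕ :=
  sSup {T : ℕ | ∃ (k : ℕ) (v : Fin k → V), IsCoolingSeq G v ∧ T = coolTime G v}


open SimpleGraph
open Fin.NatCast Fin.CommRing

lemma fin_sub_val_cases {n : ℕ} (a b : Fin n) :
    (b.val ≤ a.val ∧ (a - b).val = a.val - b.val) ∨
    (a.val < b.val ∧ (a - b).val = n + a.val - b.val) := by
  have ha := a.isLt; have hb := b.isLt
  rw [Fin.sub_def]
  simp only
  rcases le_or_gt b.val a.val with h | h
  · left
    refine ⟨h, ?_⟩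
    have : n - b.val + a.val = n + (a.val - b.val) := by omega
    rw [this, Nat.add_mod_left, Nat.mod_eq_of_lt (by omega)]
  · right
    refine ⟨h, ?_⟩
    rw [Nat.mod_eq_of_lt (by omega)]
    omega

lemma fin_add_val_cases {n : ℕ} (a b : Fin n) :
    (a.val + b.val < n ∧ (a + b).val = a.val + b.val) ∨
    (n ≤ a.val + b.val ∧ (a + b).val = a.val + b.val - n) := by
  have ha := a.isLt; have hb := b.isLt
  rw [Fin.add_def]
  simp only
  rcases lt_or_ge (a.val + b.val) n with h | h
  · exact Or.inl ⟨h, Nat.mod_eq_of_lt h⟩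
  · right
    refine ⟨h, ?_⟩
    have h2 : a.val + b.val = n + (a.val + b.val - n) := by omega
    rw [h2, Nat.add_mod_left, Nat.mod_eq_of_lt (by omega)]; omega

/-- the walk going forward -/
lemma cycle_dist_le_forward {n : ℕ} [NeZero n] (hn : 2 ≤ n) (x : Fin n) (m : ℕ) :
    (cycleGraph n).dist x (x + (m : Fin n)) ≤ m := by
  induction m with
  | zero => simp
  | succ m ih =>
      have hadj : (cycleGraph n).Adj (x + (m : Fin n)) (x + ((m+1 : ℕ) : Fin n)) := by
        rw [SimpleGraph.cycleGraph_adj']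
        right
        have : x + ((m+1 : ℕ) : Fin n) - (x + (m : Fin n)) = 1 := by
          push_cast
          ring
        rw [this]
        rw [Fin.val_one', Nat.mod_eq_of_lt (by omega)]
      calc (cycleGraph n).dist x (x + ((m+1:ℕ) : Fin n))
          ≤ (cycleGraph n).dist x (x + (m : Fin n)) + (cycleGraph n).dist (x + (m : Fin n)) (x + ((m+1:ℕ) : Fin n)) := by
            apply SimpleGraph.Connected.dist_triangle
            cases n with
            | zero => omega
            | succ n => exact SimpleGraph.cycleGraph_connected
        _ ≤ m + 1 := add_le_add ih (le_of_eq (SimpleGraph.dist_eq_one_iff_adj.mpr hadj))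

lemma delta_adj {n : ℕ} {x z : Fin n} (h : (SimpleGraph.cycleGraph n).Adj x z) :
    min ((z - x).val) (n - (z - x).val) ≤ 1 := by
  rw [SimpleGraph.cycleGraph_adj'] at h
  have h1 := fin_sub_val_cases x z
  have h2 := fin_sub_val_cases z x
  have hx := x.isLt; have hz := z.isLt
  omega

lemma delta_triangle {n : ℕ} [NeZero n] (x z y : Fin n) :
    min ((y - x).val) (n - (y - x).val) ≤
      min ((z - x).val) (n - (z - x).val) + min ((y - z).val) (n - (y - z).val) := by
  have key : y - x = (y - z) + (z - x) := (sub_add_sub_cancel y z x).symm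
  rw [key]
  have h1 := fin_add_val_cases (y - z) (z - x)
  have ha := (y - z).isLt; have hb := (z - x).isLt
  omega

lemma delta_le_walk {n : ℕ} [NeZero n] {x y : Fin n} (W : (SimpleGraph.cycleGraph n).Walk x y) :
    min ((y - x).val) (n - (y - x).val) ≤ W.length := by
  induction W with
  | nil => simp [sub_self]
  | @cons a b c h W ih =>
      calc min ((c - a).val) (n - (c - a).val)
          ≤ min ((b - a).val) (n - (b - a).val) + min ((c - b).val) (n - (c - b).val) :=
            delta_triangle a b c
        _ ≤ 1 + W.length := add_le_add (delta_adj h) ih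
        _ = (SimpleGraph.Walk.cons h W).length := by simp [SimpleGraph.Walk.length_cons]; omega

lemma cycle_dist_eq {n : ℕ} (hn : 2 ≤ n) (x y : Fin n) :
    (SimpleGraph.cycleGraph n).dist x y = min ((y - x).val) (n - (y - x).val) := by
  haveI : NeZero n := ⟨by omega⟩
  have hconn : (SimpleGraph.cycleGraph n).Connected := by
    cases n with
    | zero => omega
    | succ n => exact SimpleGraph.cycleGraph_connected
  apply le_antisymm
  · rcases eq_or_ne x y with rfl | hne
    · simp
    · have h2 : (SimpleGraph.cycleGraph n).dist x y ≤ ((y - x).val) := by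
        have := cycle_dist_le_forward hn x ((y - x).val)
        rwa [Fin.cast_val_eq_self, add_sub_cancel] at this
      have h3 : (SimpleGraph.cycleGraph n).dist x y ≤ n - ((y - x).val) := by
        have := cycle_dist_le_forward hn y ((x - y).val)
        rw [Fin.cast_val_eq_self, add_sub_cancel] at this
        rw [SimpleGraph.dist_comm]
        have e1 := fin_sub_val_cases x y
        have e2 := fin_sub_val_cases y x
        have hxy : x.val ≠ y.val := fun h => hne (Fin.ext h)
        have hx := x.isLt; have hy := y.isLt
        omega
      omega
  · obtain ⟨W, hW⟩ := (hconn x y).exists_walk_length_eq_dist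
    rw [← hW]
    exact delta_le_walk W


/-- circular distance between positions -/
def circDist (n a b : ℕ) : ℕ := min (max a b - min a b) (n - (max a b - min a b))

/-- Key counting lemma: if `k` sources sit on a cycle of length `n` with pairwise
circular distances `≥ gap + 1` and all at circular distance `≥ k - i` from position `0`,
then `3k ≤ n + 1`. -/
lemma lemA {n k : ℕ} (hk : 1 ≤ k) (p : Fin k → ℕ) (hp : ∀ i, p i < n)
    (h1 : ∀ i j : Fin k, i < j → (j : ℕ) - (i : ℕ) + 1 ≤ circDist n (p i) (p j))
    (h2 : ∀ i : Fin k, k - (i : ℕ) ≤ min (p i) (n - p i)) :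
    3 * k ≤ n + 1 := by
  classical
  -- injectivity
  have hinj : Function.Injective p := by
    intro i j hij
    by_contra hne
    have hne' : i ≠ j := fun h => hne (by rw [h])
    rcases lt_or_gt_of_ne hne' with h | h
    · have := h1 i j h
      unfold circDist at this
      rw [hij] at this
      omega
    · have := h1 j i h
      unfold circDist at this
      rw [hij] at this
      omega
  set s : Finset ℕ := Finset.image p Finset.univ with hs_def
  have hs : s.card = k := by
    rw [hs_def, Finset.card_image_of_injective _ hinj, Finset.card_univ, Fintype.card_fin]
  set o := s.orderIsoOfFin hs with ho_def
  have hmem : ∀ i, p i ∈ s := fun i => Finset.mem_image_of_mem p (Finset.mem_univ i)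
  let p' : Fin k → s := fun i => ⟨p i, hmem i⟩
  have hp'inj : Function.Injective p' := fun i j hij => hinj (congrArg Subtype.val hij)
  have hp'bij : Function.Bijective p' :=
    (Fintype.bijective_iff_injective_and_card p').mpr
      ⟨hp'inj, by rw [Fintype.card_coe, hs, Fintype.card_fin]⟩
  set e := Equiv.ofBijective p' hp'bij with he_def
  set σE : Fin k ≃ Fin k := o.toEquiv.trans e.symm with hσ_def
  have hpσ : ∀ t : Fin k, p (σE t) = (o t : ℕ) := by
    intro t
    have : e (σE t) = o t := by
      simp [hσ_def, Equiv.apply_symm_apply]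
    have := congrArg Subtype.val this
    exact this
  have hmono : ∀ t t' : Fin k, t < t' → p (σE t) < p (σE t') := by
    intro t t' htt
    rw [hpσ, hpσ]
    exact_mod_cast (o.lt_iff_lt.mpr htt)
  -- indices into the sorted sequence
  have hk1 : k - 1 < k := by omega
  let idx : ℕ → Fin k := fun t => ⟨min t (k - 1), by omega⟩
  let Q : ℕ → ℤ := fun t => (p (σE (idx t)) : ℤ)
  let S : ℕ → ℤ := fun t => ((σE (idx t) : Fin k) : ℕ)
  have hidx : ∀ t (ht : t ≤ k - 1), idx t = ⟨t, by omega⟩ := by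
    intro t ht
    simp only [idx, Fin.mk.injEq]
    omega
  -- step bound
  have hstep : ∀ t, t + 1 ≤ k - 1 → |S (t + 1) - S t| + 1 ≤ Q (t + 1) - Q t := by
    intro t ht
    have hidx1 : idx (t + 1) = ⟨t + 1, by omega⟩ := hidx _ ht
    have hidx0 : idx t = ⟨t, by omega⟩ := hidx _ (by omega)
    set i := σE (idx t) with hi
    set j := σE (idx (t + 1)) with hj
    have hij : i ≠ j := by
      intro h
      have h' := σE.injective h
      rw [hidx0, hidx1, Fin.mk.injEq] at h'
      omega
    have hQ : p i < p j := by
      apply hmono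
      rw [hidx1, hidx0]
      exact Fin.mk_lt_mk.mpr (by omega)
    have habs : |S (t + 1) - S t| = ((max (i : ℕ) (j : ℕ) - min (i : ℕ) (j : ℕ) : ℕ) : ℤ) := by
      simp only [S, ← hi, ← hj]
      rcases le_total (i : ℕ) (j : ℕ) with h | h
      · rw [max_eq_right h, min_eq_left h, abs_of_nonneg (by push_cast; omega)]
        push_cast [h]
        omega
      · rw [max_eq_left h, min_eq_right h, abs_of_nonpos (by push_cast; omega)]
        push_cast [h]
        omega
    have hcd : (max (i : ℕ) (j : ℕ) - min (i : ℕ) (j : ℕ)) + 1 ≤ circDist n (p i) (p j) := by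
      rcases lt_or_gt_of_ne hij with h | h
      · have := h1 i j h
        have hv : (i : ℕ) < (j : ℕ) := h
        omega
      · have := h1 j i h
        have hv : (j : ℕ) < (i : ℕ) := h
        unfold circDist at this ⊢
        omega
    have hcd2 : circDist n (p i) (p j) ≤ p j - p i := by
      unfold circDist
      omega
    have hQval : Q (t + 1) - Q t = ((p j : ℤ) - (p i : ℤ)) := by simp [Q, ← hi, ← hj]
    rw [habs, hQval]
    push_cast
    omega
  -- telescoping sums
  have hTel : ∀ x y : ℕ, x ≤ y → (∑ t ∈ Finset.Ico x y, (S (t + 1) - S t)) = S y - S x := by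
    intro x y hxy
    rw [Finset.sum_Ico_eq_sub _ hxy, Finset.sum_range_sub, Finset.sum_range_sub]
    ring
  have hseg : ∀ x y : ℕ, x ≤ y → |S y - S x| ≤ ∑ t ∈ Finset.Ico x y, |S (t + 1) - S t| := by
    intro x y hxy
    rw [← hTel x y hxy]
    exact Finset.abs_sum_le_sum_abs _ _
  have hQTel : (∑ t ∈ Finset.range (k - 1), (Q (t + 1) - Q t)) = Q (k - 1) - Q 0 :=
    Finset.sum_range_sub Q (k - 1)
  have hSumBound : (∑ t ∈ Finset.range (k - 1), |S (t + 1) - S t|) + (k - 1 : ℕ) ≤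
      Q (k - 1) - Q 0 := by
    have := Finset.sum_le_sum (f := fun t => |S (t + 1) - S t| + 1)
      (g := fun t => Q (t + 1) - Q t) (s := Finset.range (k - 1))
      (fun t ht => hstep t (by exact Nat.succ_le_of_lt (Finset.mem_range.mp ht)))
    rw [Finset.sum_add_distrib, Finset.sum_const, Finset.card_range, hQTel] at this
    simpa using this
  -- special positions
  let tm : Fin k := σE.symm ⟨0, by omega⟩
  let tM : Fin k := σE.symm ⟨k - 1, by omega⟩
  have hStm : S (tm : ℕ) = 0 := by
    simp only [S]
    rw [hidx _ (by omega : (tm : ℕ) ≤ k - 1)]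
    have : (⟨(tm : ℕ), tm.isLt⟩ : Fin k) = tm := rfl
    rw [this]
    simp [tm, Equiv.apply_symm_apply]
  have hStM : S (tM : ℕ) = ((k : ℤ) - 1) := by
    simp only [S]
    rw [hidx _ (by omega : (tM : ℕ) ≤ k - 1)]
    have : (⟨(tM : ℕ), tM.isLt⟩ : Fin k) = tM := rfl
    rw [this]
    simp only [tM, Equiv.apply_symm_apply]
    push_cast
    omega
  -- end bounds
  have ha0 : (0 : ℤ) ≤ S 0 := by positivity
  have haK : S 0 ≤ (k : ℤ) - 1 := by
    have := (σE (idx 0)).isLt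
    simp only [S]
    push_cast
    omega
  have hb0 : (0 : ℤ) ≤ S (k - 1) := by positivity
  have hbK : S (k - 1) ≤ (k : ℤ) - 1 := by
    have := (σE (idx (k - 1))).isLt
    simp only [S]
    push_cast
    omega
  have hends : ∀ t : ℕ, (k : ℤ) - S t ≤ Q t ∧ (k : ℤ) - S t ≤ (n : ℤ) - Q t := by
    intro t
    have h2' := h2 (σE (idx t))
    have hpi := hp (σE (idx t))
    simp only [S, Q]
    constructor <;> [skip; skip] <;> push_cast <;> omega
  have hQ0 := (hends 0).1
  have hQK := (hends (k - 1)).2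
  -- combine according to the relative position of tm and tM
  have hRange : Finset.range (k - 1) = Finset.Ico 0 (k - 1) := by
    rw [Finset.range_eq_Ico]
  rcases le_total (tm : ℕ) (tM : ℕ) with hcase | hcase
  · have s1 : (∑ t ∈ Finset.Ico 0 (tm : ℕ), |S (t + 1) - S t|) +
        (∑ t ∈ Finset.Ico (tm : ℕ) (tM : ℕ), |S (t + 1) - S t|) =
        ∑ t ∈ Finset.Ico 0 (tM : ℕ), |S (t + 1) - S t| :=
      Finset.sum_Ico_consecutive _ (by omega) hcase
    have s2 : (∑ t ∈ Finset.Ico 0 (tM : ℕ), |S (t + 1) - S t|) +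
        (∑ t ∈ Finset.Ico (tM : ℕ) (k - 1), |S (t + 1) - S t|) =
        ∑ t ∈ Finset.Ico 0 (k - 1), |S (t + 1) - S t| :=
      Finset.sum_Ico_consecutive _ (by omega) (by have := tM.isLt; omega)
    have hsplit : (∑ t ∈ Finset.Ico 0 (tm : ℕ), |S (t + 1) - S t|) +
        (∑ t ∈ Finset.Ico (tm : ℕ) (tM : ℕ), |S (t + 1) - S t|) +
        (∑ t ∈ Finset.Ico (tM : ℕ) (k - 1), |S (t + 1) - S t|) =
        ∑ t ∈ Finset.range (k - 1), |S (t + 1) - S t| := by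
      rw [hRange, ← s2, ← s1]
    have e1 := hseg 0 (tm : ℕ) (by omega)
    have e2 := hseg (tm : ℕ) (tM : ℕ) hcase
    have e3 := hseg (tM : ℕ) (k - 1) (by have := tM.isLt; omega)
    rw [hStm] at e1 e2
    rw [hStM] at e2 e3
    have a1 : S 0 ≤ |0 - S 0| := by rw [zero_sub, abs_neg]; exact le_abs_self _
    have a2 : (k : ℤ) - 1 ≤ |(k : ℤ) - 1 - 0| := by
      rw [sub_zero]; exact le_abs_self _
    have a3 : (k : ℤ) - 1 - S (k - 1) ≤ |S (k - 1) - ((k : ℤ) - 1)| := by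
      rw [abs_sub_comm]; exact le_abs_self _
    have hcast : ((k - 1 : ℕ) : ℤ) = (k : ℤ) - 1 := by push_cast; omega
    rw [hcast] at hSumBound
    have hn1 : Q (k - 1) ≤ (n : ℤ) - 1 := by
      have := hp (σE (idx (k - 1)))
      simp only [Q]; push_cast; omega
    linarith [e1, e2, e3, hsplit, hSumBound, hQ0, hQK, hbK,
      Finset.sum_nonneg (fun t (_ : t ∈ Finset.Ico 0 (tm:ℕ)) => abs_nonneg (S (t+1) - S t)),
      Finset.sum_nonneg (fun t (_ : t ∈ Finset.Ico (tm:ℕ) (tM:ℕ)) => abs_nonneg (S (t+1) - S t)),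
      Finset.sum_nonneg (fun t (_ : t ∈ Finset.Ico (tM:ℕ) (k-1)) => abs_nonneg (S (t+1) - S t))]
  · have s1 : (∑ t ∈ Finset.Ico 0 (tM : ℕ), |S (t + 1) - S t|) +
        (∑ t ∈ Finset.Ico (tM : ℕ) (tm : ℕ), |S (t + 1) - S t|) =
        ∑ t ∈ Finset.Ico 0 (tm : ℕ), |S (t + 1) - S t| :=
      Finset.sum_Ico_consecutive _ (by omega) hcase
    have s2 : (∑ t ∈ Finset.Ico 0 (tm : ℕ), |S (t + 1) - S t|) +
        (∑ t ∈ Finset.Ico (tm : ℕ) (k - 1), |S (t + 1) - S t|) =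
        ∑ t ∈ Finset.Ico 0 (k - 1), |S (t + 1) - S t| :=
      Finset.sum_Ico_consecutive _ (by omega) (by have := tm.isLt; omega)
    have hsplit : (∑ t ∈ Finset.Ico 0 (tM : ℕ), |S (t + 1) - S t|) +
        (∑ t ∈ Finset.Ico (tM : ℕ) (tm : ℕ), |S (t + 1) - S t|) +
        (∑ t ∈ Finset.Ico (tm : ℕ) (k - 1), |S (t + 1) - S t|) =
        ∑ t ∈ Finset.range (k - 1), |S (t + 1) - S t| := by
      rw [hRange, ← s2, ← s1]
    have e1 := hseg 0 (tM : ℕ) (by omega)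
    have e2 := hseg (tM : ℕ) (tm : ℕ) hcase
    have e3 := hseg (tm : ℕ) (k - 1) (by have := tm.isLt; omega)
    rw [hStM] at e1 e2
    rw [hStm] at e2 e3
    have a1 : (k : ℤ) - 1 - S 0 ≤ |(k : ℤ) - 1 - S 0| := le_abs_self _
    have a2 : (k : ℤ) - 1 ≤ |0 - ((k : ℤ) - 1)| := by
      rw [zero_sub, abs_neg]; exact le_abs_self _
    have a3 : S (k - 1) ≤ |S (k - 1) - 0| := by rw [sub_zero]; exact le_abs_self _
    have hcast : ((k - 1 : ℕ) : ℤ) = (k : ℤ) - 1 := by push_cast; omega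
    rw [hcast] at hSumBound
    linarith [e1, e2, e3, hsplit, hSumBound, hQ0, hQK, haK,
      Finset.sum_nonneg (fun t (_ : t ∈ Finset.Ico 0 (tM:ℕ)) => abs_nonneg (S (t+1) - S t)),
      Finset.sum_nonneg (fun t (_ : t ∈ Finset.Ico (tM:ℕ) (tm:ℕ)) => abs_nonneg (S (t+1) - S t)),
      Finset.sum_nonneg (fun t (_ : t ∈ Finset.Ico (tm:ℕ) (k-1)) => abs_nonneg (S (t+1) - S t))]


lemma cycle_dist_rel {n : ℕ} (hn : 2 ≤ n) (w x y : Fin n) :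
    (SimpleGraph.cycleGraph n).dist x y = circDist n ((x - w).val) ((y - w).val) := by
  haveI : NeZero n := ⟨by omega⟩
  rw [cycle_dist_eq hn]
  have key : y - x = (y - w) - (x - w) := by
    rw [sub_sub_sub_cancel_right]
  rw [key]
  have h1 := fin_sub_val_cases (y - w) (x - w)
  have ha := (y - w).isLt; have hb := (x - w).isLt
  unfold circDist
  omega

lemma val_sub_self_zero {n : ℕ} [NeZero n] (x : Fin n) : (x - x).val = 0 := by
  rw [sub_self]; rfl

lemma coolTime_le_bound {n : ℕ} (hn : 3 ≤ n) {k : ℕ} (v : Fin k → Fin n)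
    (h : IsCoolingSeq (SimpleGraph.cycleGraph n) v) :
    coolTime (SimpleGraph.cycleGraph n) v ≤ (n + 4) / 3 := by
  haveI : NeZero n := ⟨by omega⟩
  have hn2 : 2 ≤ n := by omega
  obtain ⟨i0, -⟩ := h.2 0
  have hk1 : 1 ≤ k := by have := i0.isLt; omega
  -- Step A : 3 * (k - 1) ≤ n + 1
  have hkc : 3 * (k - 1) ≤ n + 1 := by
    rcases Nat.lt_or_ge k 2 with hk2 | hk2
    · omega
    · set last : Fin k := ⟨k - 1, by omega⟩ with hlast
      apply lemA (n := n) (k := k - 1) (by omega)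
        (fun i => ((v ⟨i.val, by omega⟩ - v last).val))
      · intro i; exact Fin.isLt _
      · intro i j hij
        have hlt : (⟨i.val, by omega⟩ : Fin k) < ⟨j.val, by omega⟩ := hij
        have hd := h.1 _ _ hlt
        rw [cycle_dist_rel hn2 (v last)] at hd
        simpa using hd
      · intro i
        have hlt : (⟨i.val, by omega⟩ : Fin k) < last := by
          rw [hlast, Fin.mk_lt_mk]
          exact i.isLt
        have hd := h.1 _ last hlt
        rw [cycle_dist_rel hn2 (v last)] at hd
        rw [val_sub_self_zero] at hd
        have hplt : (v ⟨i.val, by omega⟩ - v last).val < n := Fin.isLt _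
        unfold circDist at hd
        simp only [Fin.val_mk] at hd ⊢
        have hlv : (last : ℕ) = k - 1 := by rw [hlast]
        omega
  set c := (n + 4) / 3 with hc
  have hkc2 : k ≤ c := by omega
  apply Finset.sup_le
  intro u _
  by_contra hgt
  push_neg at hgt
  have hall : ∀ i : Fin k, c + 1 ≤ (i : ℕ) + 1 + (SimpleGraph.cycleGraph n).dist (v i) u :=
    fun i => lt_of_lt_of_le hgt (Nat.sInf_le ⟨i, rfl⟩)
  obtain ⟨iu, hiu⟩ := h.2 u
  have hsle : sInf {m : ℕ | ∃ i : Fin k, m = (i : ℕ) + 1 +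
      (SimpleGraph.cycleGraph n).dist (v i) u} ≤ k + 1 :=
    le_trans (Nat.sInf_le ⟨iu, rfl⟩) hiu
  have hck : c ≤ k := by omega
  have hkeq : k = c := le_antisymm hkc2 hck
  have hcontra := lemA (n := n) (k := k) hk1 (fun i => (v i - u).val)
    (fun i => Fin.isLt _)
    (by
      intro i j hij
      show (j : ℕ) - (i : ℕ) + 1 ≤ circDist n ((v i - u).val) ((v j - u).val)
      have hd := h.1 i j hij
      rw [cycle_dist_rel hn2 u] at hd
      omega)
    (by
      intro i
      show k - (i : ℕ) ≤ min ((v i - u).val) (n - (v i - u).val)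
      have hd := hall i
      rw [cycle_dist_rel hn2 u, val_sub_self_zero] at hd
      have hplt : (v i - u).val < n := Fin.isLt _
      unfold circDist at hd
      omega)
  omega

lemma exists_max_seq {n : ℕ} (hn : 3 ≤ n) :
    ∃ (k : ℕ) (v : Fin k → Fin n), IsCoolingSeq (SimpleGraph.cycleGraph n) v ∧
      coolTime (SimpleGraph.cycleGraph n) v = (n + 4) / 3 := by
  haveI : NeZero n := ⟨by omega⟩
  have hn2 : 2 ≤ n := by omega
  set k := (n + 2) / 3 with hk
  have hk3 : n ≤ 3 * k ∧ 3 * k ≤ n + 2 := by omega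
  have hk1 : 1 ≤ k := by omega
  have hvval : ∀ i : Fin k, (((2 * i.val : ℕ) : Fin n)).val = 2 * i.val := by
    intro i
    rw [Fin.val_natCast, Nat.mod_eq_of_lt (by have := i.isLt; omega)]
  set v : Fin k → Fin n := fun i => ((2 * i.val : ℕ) : Fin n) with hv
  have hseq : IsCoolingSeq (SimpleGraph.cycleGraph n) v := by
    constructor
    · intro i j hij
      rw [cycle_dist_eq hn2]
      have hsub := fin_sub_val_cases (v j) (v i)
      rw [hvval i, hvval j] at hsub
      have hi := i.isLt; have hj := j.isLt
      have hvij : (i : ℕ) < (j : ℕ) := hij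
      omega
    · intro u
      have hx := u.isLt
      rcases le_or_gt u.val k with hcase | hcase
      · refine ⟨⟨0, by omega⟩, ?_⟩
        rw [cycle_dist_eq hn2]
        have hsub := fin_sub_val_cases u (v ⟨0, by omega⟩)
        rw [hvval ⟨0, by omega⟩] at hsub
        simp only [Fin.val_mk] at hsub ⊢
        omega
      · rcases le_or_gt u.val (2 * k - 1) with hcase2 | hcase2
        · refine ⟨⟨u.val - k, by omega⟩, ?_⟩
          rw [cycle_dist_eq hn2]
          have hsub := fin_sub_val_cases u (v ⟨u.val - k, by omega⟩)
          rw [hvval ⟨u.val - k, by omega⟩] at hsub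
          simp only [Fin.val_mk] at hsub ⊢
          omega
        · refine ⟨⟨0, by omega⟩, ?_⟩
          rw [cycle_dist_eq hn2]
          have hsub := fin_sub_val_cases u (v ⟨0, by omega⟩)
          rw [hvval ⟨0, by omega⟩] at hsub
          simp only [Fin.val_mk] at hsub ⊢
          omega
  refine ⟨k, v, hseq, le_antisymm (coolTime_le_bound hn v hseq) ?_⟩
  -- lower bound on coolTime via the witness vertex at position n - k
  set c := (n + 4) / 3 with hc
  set u : Fin n := ((n - k : ℕ) : Fin n) with hu
  have huval : u.val = n - k := by
    rw [hu, Fin.val_natCast, Nat.mod_eq_of_lt (by omega)]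
  have hlow : c ≤ sInf {m : ℕ | ∃ i : Fin k, m = (i : ℕ) + 1 +
      (SimpleGraph.cycleGraph n).dist (v i) u} := by
    have hne : {m : ℕ | ∃ i : Fin k, m = (i : ℕ) + 1 +
        (SimpleGraph.cycleGraph n).dist (v i) u}.Nonempty := ⟨_, ⟨⟨0, hk1⟩, rfl⟩⟩
    obtain ⟨i, hi⟩ := Nat.sInf_mem hne
    rw [hi]
    rw [cycle_dist_eq hn2]
    have hsub := fin_sub_val_cases u (v i)
    rw [hvval i, huval] at hsub
    have hi := i.isLt
    omega
  calc c ≤ _ := hlow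
    _ ≤ coolTime (SimpleGraph.cycleGraph n) v := by
        unfold coolTime
        exact Finset.le_sup (f := fun u : Fin n => sInf {m : ℕ | ∃ i : Fin k,
          m = (i : ℕ) + 1 + (SimpleGraph.cycleGraph n).dist (v i) u}) (Finset.mem_univ u)

/-- For every `n ≥ 3`, the cooling number of the cycle on `n` vertices is
`⌈(n + 2) / 3⌉`. -/
theorem coolingNumber_cycleGraph (n : ℕ) (hn : 3 ≤ n) :
    coolingNumber (SimpleGraph.cycleGraph n) = (n + 2 + 2) / 3 := by
  obtain ⟨k, v, hseq, hct⟩ := exists_max_seq hn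
  have heq : n + 2 + 2 = n + 4 := by omega
  rw [heq]
  have hmem : (n + 4) / 3 ∈ {T : ℕ | ∃ (k : ℕ) (v : Fin k → Fin n),
      IsCoolingSeq (SimpleGraph.cycleGraph n) v ∧ T = coolTime (SimpleGraph.cycleGraph n) v} :=
    ⟨k, v, hseq, hct.symm⟩
  have hbdd : ∀ T ∈ {T : ℕ | ∃ (k : ℕ) (v : Fin k → Fin n),
      IsCoolingSeq (SimpleGraph.cycleGraph n) v ∧ T = coolTime (SimpleGraph.cycleGraph n) v},
      T ≤ (n + 4) / 3 := by
    rintro T ⟨k', v', hs', rfl⟩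
    exact coolTime_le_bound hn v' hs'
  exact le_antisymm (csSup_le ⟨_, hmem⟩ hbdd)
    (le_csSup ⟨(n + 4) / 3, fun T hT => hbdd T hT⟩ hmem)
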